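/- arXiv:2511.09487 — 2 statements merged into one kernel-verified Lean document; each statement's English description precedes it below -/
import Mathlib

section
/- Let A = {a_1, …, a_l} be a finite subset of a metric space with diameter diam(A) ≤ m. Let A₁ and A₂ be the (random) sets of distinct elements obtained from S₁ and S₂ independent i.i.d. uniform draws from A, respectively, with S₁, S₂ ≥ 1 so that both are nonempty. Let φ : [0,∞) → ℝ be non-decreasing. Then E[φ(h(A₁, A₂))] ≤ (φ(m) − φ(0)) · λ(l, S₁, S₂) + φ(0), where h denotes the Hausdorff distance and λ(l, S₁, S₂) = l[(1 − 1/l)^{S₁} + (1 − 1/l)^{S₂} − 2(1 − 1/l)^{S₁+S₂}]. -/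
open MeasureTheory Metric
open scoped ENNReal

private lemma sum_fn_prod {l S : ℕ} (g : Fin l → ℝ) :
    ∑ f : Fin S → Fin l, ∏ s : Fin S, g (f s) = (∑ j : Fin l, g j) ^ S := by
  classical
  rw [← Fintype.piFinset_univ, ← Finset.prod_univ_sum]
  simp

private lemma myProdIndicator {l S : ℕ} (i : Fin l) (f : Fin S → Fin l) :
    (∏ s : Fin S, if f s = i then (0:ℝ) else 1)
      = if i ∈ Set.range f then (0:ℝ) else 1 := by
  by_cases h : i ∈ Set.range f
  · obtain ⟨s, hs⟩ := h
    rw [if_pos ⟨s, hs⟩]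
    exact Finset.prod_eq_zero (Finset.mem_univ s) (by simp [hs])
  · rw [if_neg h]
    apply Finset.prod_eq_one
    intro s _
    rw [if_neg fun hs => h ⟨s, hs⟩]

private lemma sum_miss {l S : ℕ} (hl : 1 ≤ l) (i : Fin l) :
    ∑ f : Fin S → Fin l, ((l:ℝ)⁻¹ ^ S * if i ∈ Set.range f then (0:ℝ) else 1)
      = (1 - 1/(l:ℝ)) ^ S := by
  have hl0 : (0:ℝ) < l := by exact_mod_cast hl
  have key : ∀ f : Fin S → Fin l, (l:ℝ)⁻¹ ^ S * (if i ∈ Set.range f then (0:ℝ) else 1)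
      = ∏ s : Fin S, ((l:ℝ)⁻¹ * if f s = i then (0:ℝ) else 1) := by
    intro f
    rw [Finset.prod_mul_distrib, Finset.prod_const, myProdIndicator, Finset.card_univ,
      Fintype.card_fin]
  rw [Finset.sum_congr rfl fun f _ => key f]
  calc (∑ f : Fin S → Fin l, ∏ s : Fin S, ((l:ℝ)⁻¹ * if f s = i then (0:ℝ) else 1))
      = (∑ j : Fin l, ((l:ℝ)⁻¹ * if j = i then (0:ℝ) else 1)) ^ S :=
        sum_fn_prod (fun j : Fin l => (l:ℝ)⁻¹ * if j = i then (0:ℝ) else 1)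
    _ = (1 - 1/(l:ℝ)) ^ S := ?_
  congr 1
  rw [← Finset.mul_sum]
  have h1 : ∑ j : Fin l, (if j = i then (0:ℝ) else 1) = l - 1 := by
    have h2 : ∀ j : Fin l, (if j = i then (0:ℝ) else 1) = 1 - if j = i then 1 else 0 := by
      intro j; split <;> ring
    simp only [h2]
    rw [Finset.sum_sub_distrib, Finset.sum_const, Finset.sum_ite_eq' Finset.univ i
      (fun _ => (1:ℝ))]
    simp
  rw [h1]
  field_simp

private lemma sum_total {l S : ℕ} (hl : 1 ≤ l) :
    ∑ _f : Fin S → Fin l, (l:ℝ)⁻¹ ^ S = 1 := by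
  have hl0 : (0:ℝ) < l := by exact_mod_cast hl
  rw [Finset.sum_const, Finset.card_univ, nsmul_eq_mul]
  simp only [Fintype.card_fun, Fintype.card_fin]
  push_cast
  rw [← mul_pow, mul_inv_cancel₀ hl0.ne', one_pow]

private lemma sum_hit {l S : ℕ} (hl : 1 ≤ l) (i : Fin l) :
    ∑ f : Fin S → Fin l, ((l:ℝ)⁻¹ ^ S * if i ∈ Set.range f then (1:ℝ) else 0)
      = 1 - (1 - 1/(l:ℝ)) ^ S := by
  have key : ∀ f : Fin S → Fin l, (l:ℝ)⁻¹ ^ S * (if i ∈ Set.range f then (1:ℝ) else 0)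
      = (l:ℝ)⁻¹ ^ S - (l:ℝ)⁻¹ ^ S * (if i ∈ Set.range f then (0:ℝ) else 1) := by
    intro f; split <;> ring
  simp only [key]
  rw [Finset.sum_sub_distrib, sum_total hl, sum_miss hl i]

/-- Lemma (Hausdorff-distance expectation bound): for `A = {a 1, …, a l}` with
`diam A ≤ m`, and `A₁, A₂` the sets of distinct values of `S₁`, `S₂` i.i.d.
uniform draws, `E[φ(h(A₁, A₂))] ≤ (φ m − φ 0)·λ(l,S₁,S₂) + φ 0`. -/
theorem stmt4 {X : Type*} [MetricSpace X] (l S₁ S₂ : ℕ) (hl : 1 ≤ l)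
    (hS₁ : 1 ≤ S₁) (hS₂ : 1 ≤ S₂)
    (a : Fin l → X) (ha : Function.Injective a)
    (m : ℝ) (hdiam : Metric.diam (Set.range a) ≤ m)
    (φ : ℝ → ℝ) (hφ : MonotoneOn φ (Set.Ici 0)) :
    (∫ p : (Fin S₁ → Fin l) × (Fin S₂ → Fin l),
        φ (hausdorffDist (a '' Set.range p.1) (a '' Set.range p.2))
      ∂((Measure.pi fun _ : Fin S₁ =>
            (PMF.uniformOfFinset (Finset.univ : Finset (Fin l))
              ⟨⟨0, hl⟩, Finset.mem_univ _⟩).toMeasure).prod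
          (Measure.pi fun _ : Fin S₂ =>
            (PMF.uniformOfFinset (Finset.univ : Finset (Fin l))
              ⟨⟨0, hl⟩, Finset.mem_univ _⟩).toMeasure)))
      ≤ (φ m - φ 0) * ((l : ℝ) * ((1 - 1 / (l : ℝ)) ^ S₁ + (1 - 1 / (l : ℝ)) ^ S₂
          - 2 * (1 - 1 / (l : ℝ)) ^ (S₁ + S₂))) + φ 0 := by
  classical
  have hl0 : (0:ℝ) < l := by exact_mod_cast hl
  have hm0 : 0 ≤ m := le_trans diam_nonneg hdiam
  have hφm : φ 0 ≤ φ m := hφ (Set.mem_Ici.2 le_rfl) (Set.mem_Ici.2 hm0) hm0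
  set ν : Measure (Fin l) := (PMF.uniformOfFinset (Finset.univ : Finset (Fin l))
      ⟨⟨0, hl⟩, Finset.mem_univ _⟩).toMeasure with hνdef
  -- measure of singletons
  have hν : ∀ x : Fin l, ν {x} = (l : ℝ≥0∞)⁻¹ := by
    intro x
    rw [hνdef, PMF.toMeasure_apply_singleton _ _ (measurableSet_singleton x)]
    have key : ∀ hs, (PMF.uniformOfFinset (Finset.univ : Finset (Fin l)) hs) x = (l:ℝ≥0∞)⁻¹ := by
      intro hs
      rw [PMF.uniformOfFinset_apply_of_mem, Finset.card_univ, Fintype.card_fin]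
      exact Finset.mem_univ x
    exact key _
  have hsing : ∀ p : (Fin S₁ → Fin l) × (Fin S₂ → Fin l),
      ((Measure.pi fun _ : Fin S₁ => ν).prod (Measure.pi fun _ : Fin S₂ => ν)) {p}
        = (l:ℝ≥0∞)⁻¹ ^ S₁ * (l:ℝ≥0∞)⁻¹ ^ S₂ := by
    rintro ⟨f, g⟩
    rw [← Set.singleton_prod_singleton, Measure.prod_prod,
      ← Set.univ_pi_singleton f, ← Set.univ_pi_singleton g, Measure.pi_pi, Measure.pi_pi]
    simp [hν]
  rw [integral_fintype Integrable.of_finite]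
  have htr : (((l:ℝ≥0∞)⁻¹ ^ S₁ * (l:ℝ≥0∞)⁻¹ ^ S₂)).toReal
      = (l:ℝ)⁻¹ ^ S₁ * (l:ℝ)⁻¹ ^ S₂ := by
    rw [ENNReal.toReal_mul, ENNReal.toReal_pow, ENNReal.toReal_pow, ENNReal.toReal_inv]
    simp
  simp only [Measure.real, hsing, htr, smul_eq_mul]
  set W : ℝ := (l:ℝ)⁻¹ ^ S₁ * (l:ℝ)⁻¹ ^ S₂ with hWdef
  have hW0 : 0 ≤ W := by positivity
  -- pointwise bound
  have him : ∀ p : (Fin S₁ → Fin l) × (Fin S₂ → Fin l),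
      hausdorffDist (a '' Set.range p.1) (a '' Set.range p.2) ≤ m := by
    intro p
    have hne1 : (a '' Set.range p.1).Nonempty :=
      (@Set.range_nonempty _ _ ⟨⟨0, hS₁⟩⟩ p.1).image a
    have hne2 : (a '' Set.range p.2).Nonempty :=
      (@Set.range_nonempty _ _ ⟨⟨0, hS₂⟩⟩ p.2).image a
    have hb1 : Bornology.IsBounded (a '' Set.range p.1) :=
      ((Set.finite_range p.1).image a).isBounded
    have hb2 : Bornology.IsBounded (a '' Set.range p.2) :=
      ((Set.finite_range p.2).image a).isBounded
    calc hausdorffDist (a '' Set.range p.1) (a '' Set.range p.2)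
        ≤ diam (a '' Set.range p.1 ∪ a '' Set.range p.2) :=
          hausdorffDist_le_diam hne1 hb1 hne2 hb2
      _ ≤ diam (Set.range a) := diam_mono
          (Set.union_subset (Set.image_subset_range a _) (Set.image_subset_range a _))
          (Set.finite_range a).isBounded
      _ ≤ m := hdiam
  have hpoint : ∀ p : (Fin S₁ → Fin l) × (Fin S₂ → Fin l),
      φ (hausdorffDist (a '' Set.range p.1) (a '' Set.range p.2))
        ≤ φ 0 + (φ m - φ 0) * (if Set.range p.1 = Set.range p.2 then (0:ℝ) else 1) := by
    intro p
    by_cases hE : Set.range p.1 = Set.range p.2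
    · simp [hE, Metric.hausdorffDist_self_zero]
    · have h0 : (0:ℝ) ≤ hausdorffDist (a '' Set.range p.1) (a '' Set.range p.2) :=
        hausdorffDist_nonneg
      have := hφ (Set.mem_Ici.2 h0) (Set.mem_Ici.2 hm0) (him p)
      rw [if_neg hE]
      linarith
  -- total mass one
  have hWsum : ∑ _p : (Fin S₁ → Fin l) × (Fin S₂ → Fin l), W = 1 := by
    rw [hWdef, Fintype.sum_prod_type, ← Finset.sum_mul_sum Finset.univ Finset.univ
      (fun _ : Fin S₁ → Fin l => (l:ℝ)⁻¹ ^ S₁) (fun _ : Fin S₂ → Fin l => (l:ℝ)⁻¹ ^ S₂),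
      sum_total hl, sum_total hl, one_mul]
  -- union bound, pointwise
  have hind : ∀ p : (Fin S₁ → Fin l) × (Fin S₂ → Fin l),
      (if Set.range p.1 = Set.range p.2 then (0:ℝ) else 1)
        ≤ ∑ i : Fin l,
            ((if i ∈ Set.range p.1 then (0:ℝ) else 1) * (if i ∈ Set.range p.2 then (1:ℝ) else 0)
            + (if i ∈ Set.range p.1 then (1:ℝ) else 0) *
                (if i ∈ Set.range p.2 then (0:ℝ) else 1)) := by
    intro p
    have hterm0 : ∀ i : Fin l, (0:ℝ)
        ≤ (if i ∈ Set.range p.1 then (0:ℝ) else 1) * (if i ∈ Set.range p.2 then (1:ℝ) else 0)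
          + (if i ∈ Set.range p.1 then (1:ℝ) else 0) *
              (if i ∈ Set.range p.2 then (0:ℝ) else 1) := by
      intro i
      apply add_nonneg <;> apply mul_nonneg <;> split <;> norm_num
    by_cases hE : Set.range p.1 = Set.range p.2
    · rw [if_pos hE]
      exact Finset.sum_nonneg fun i _ => hterm0 i
    · rw [if_neg hE]
      have hex : ∃ i : Fin l, ¬(i ∈ Set.range p.1 ↔ i ∈ Set.range p.2) := by
        by_contra h
        push_neg at h
        exact hE (Set.ext fun i => h i)
      obtain ⟨i, hi⟩ := hex
      have hterm : (1:ℝ)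
          ≤ (if i ∈ Set.range p.1 then (0:ℝ) else 1) * (if i ∈ Set.range p.2 then (1:ℝ) else 0)
            + (if i ∈ Set.range p.1 then (1:ℝ) else 0) *
                (if i ∈ Set.range p.2 then (0:ℝ) else 1) := by
        by_cases h1 : i ∈ Set.range p.1 <;> by_cases h2 : i ∈ Set.range p.2
        · exact absurd (iff_of_true h1 h2) hi
        · simp [h1, h2]
        · simp [h1, h2]
        · exact absurd (iff_of_false h1 h2) hi
      exact le_trans hterm (Finset.single_le_sum (fun i _ => hterm0 i) (Finset.mem_univ i))
  -- factorization for each i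
  have hfactor : ∀ i : Fin l,
      ∑ p : (Fin S₁ → Fin l) × (Fin S₂ → Fin l),
        W * ((if i ∈ Set.range p.1 then (0:ℝ) else 1) *
              (if i ∈ Set.range p.2 then (1:ℝ) else 0)
          + (if i ∈ Set.range p.1 then (1:ℝ) else 0) *
              (if i ∈ Set.range p.2 then (0:ℝ) else 1))
        = (1 - 1/(l:ℝ)) ^ S₁ * (1 - (1 - 1/(l:ℝ)) ^ S₂)
          + (1 - (1 - 1/(l:ℝ)) ^ S₁) * (1 - 1/(l:ℝ)) ^ S₂ := by
    intro i
    rw [Fintype.sum_prod_type]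
    have hsplit : ∀ (f : Fin S₁ → Fin l) (g : Fin S₂ → Fin l),
        W * ((if i ∈ Set.range f then (0:ℝ) else 1) * (if i ∈ Set.range g then (1:ℝ) else 0)
          + (if i ∈ Set.range f then (1:ℝ) else 0) * (if i ∈ Set.range g then (0:ℝ) else 1))
        = ((l:ℝ)⁻¹ ^ S₁ * if i ∈ Set.range f then (0:ℝ) else 1) *
            ((l:ℝ)⁻¹ ^ S₂ * if i ∈ Set.range g then (1:ℝ) else 0)
          + ((l:ℝ)⁻¹ ^ S₁ * if i ∈ Set.range f then (1:ℝ) else 0) *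
            ((l:ℝ)⁻¹ ^ S₂ * if i ∈ Set.range g then (0:ℝ) else 1) := by
      intro f g
      rw [hWdef]; ring
    simp only [hsplit]
    simp only [Finset.sum_add_distrib]
    rw [← Finset.sum_mul_sum Finset.univ Finset.univ
        (fun f : Fin S₁ → Fin l => (l:ℝ)⁻¹ ^ S₁ * if i ∈ Set.range f then (0:ℝ) else 1)
        (fun g : Fin S₂ → Fin l => (l:ℝ)⁻¹ ^ S₂ * if i ∈ Set.range g then (1:ℝ) else 0),
      ← Finset.sum_mul_sum Finset.univ Finset.univ
        (fun f : Fin S₁ → Fin l => (l:ℝ)⁻¹ ^ S₁ * if i ∈ Set.range f then (1:ℝ) else 0)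
        (fun g : Fin S₂ → Fin l => (l:ℝ)⁻¹ ^ S₂ * if i ∈ Set.range g then (0:ℝ) else 1),
      sum_miss hl i, sum_hit hl i, sum_hit hl i, sum_miss hl i]
  -- probability bound
  have hP : ∑ p : (Fin S₁ → Fin l) × (Fin S₂ → Fin l),
      W * (if Set.range p.1 = Set.range p.2 then (0:ℝ) else 1)
      ≤ (l : ℝ) * ((1 - 1 / (l : ℝ)) ^ S₁ + (1 - 1 / (l : ℝ)) ^ S₂
          - 2 * (1 - 1 / (l : ℝ)) ^ (S₁ + S₂)) := by
    calc ∑ p : (Fin S₁ → Fin l) × (Fin S₂ → Fin l),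
          W * (if Set.range p.1 = Set.range p.2 then (0:ℝ) else 1)
        ≤ ∑ p : (Fin S₁ → Fin l) × (Fin S₂ → Fin l),
            W * ∑ i : Fin l,
              ((if i ∈ Set.range p.1 then (0:ℝ) else 1) *
                  (if i ∈ Set.range p.2 then (1:ℝ) else 0)
              + (if i ∈ Set.range p.1 then (1:ℝ) else 0) *
                  (if i ∈ Set.range p.2 then (0:ℝ) else 1)) :=
          Finset.sum_le_sum fun p _ => mul_le_mul_of_nonneg_left (hind p) hW0
      _ = ∑ i : Fin l, ∑ p : (Fin S₁ → Fin l) × (Fin S₂ → Fin l),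
            W * ((if i ∈ Set.range p.1 then (0:ℝ) else 1) *
                  (if i ∈ Set.range p.2 then (1:ℝ) else 0)
              + (if i ∈ Set.range p.1 then (1:ℝ) else 0) *
                  (if i ∈ Set.range p.2 then (0:ℝ) else 1)) := by
          simp only [Finset.mul_sum]
          rw [Finset.sum_comm]
      _ = ∑ _i : Fin l, ((1 - 1/(l:ℝ)) ^ S₁ * (1 - (1 - 1/(l:ℝ)) ^ S₂)
            + (1 - (1 - 1/(l:ℝ)) ^ S₁) * (1 - 1/(l:ℝ)) ^ S₂) :=
          Finset.sum_congr rfl fun i _ => hfactor i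
      _ = (l : ℝ) * ((1 - 1 / (l : ℝ)) ^ S₁ + (1 - 1 / (l : ℝ)) ^ S₂
          - 2 * (1 - 1 / (l : ℝ)) ^ (S₁ + S₂)) := by
          rw [Finset.sum_const, Finset.card_univ, Fintype.card_fin, nsmul_eq_mul, pow_add]
          ring
  calc ∑ p : (Fin S₁ → Fin l) × (Fin S₂ → Fin l),
        W * φ (hausdorffDist (a '' Set.range p.1) (a '' Set.range p.2))
      ≤ ∑ p : (Fin S₁ → Fin l) × (Fin S₂ → Fin l),
          W * (φ 0 + (φ m - φ 0) *
            (if Set.range p.1 = Set.range p.2 then (0:ℝ) else 1)) :=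
        Finset.sum_le_sum fun p _ => mul_le_mul_of_nonneg_left (hpoint p) hW0
    _ = φ 0 + (φ m - φ 0) * ∑ p : (Fin S₁ → Fin l) × (Fin S₂ → Fin l),
          W * (if Set.range p.1 = Set.range p.2 then (0:ℝ) else 1) := by
        simp only [mul_add, Finset.sum_add_distrib]
        rw [← Finset.sum_mul, hWsum, one_mul]
        congr 1
        rw [Finset.mul_sum]
        exact Finset.sum_congr rfl fun p _ => by ring
    _ ≤ φ 0 + (φ m - φ 0) * ((l : ℝ) * ((1 - 1 / (l : ℝ)) ^ S₁ + (1 - 1 / (l : ℝ)) ^ S₂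
          - 2 * (1 - 1 / (l : ℝ)) ^ (S₁ + S₂))) :=
        (add_le_add_iff_left _).2 (mul_le_mul_of_nonneg_left hP (by linarith))
    _ = (φ m - φ 0) * ((l : ℝ) * ((1 - 1 / (l : ℝ)) ^ S₁ + (1 - 1 / (l : ℝ)) ^ S₂
          - 2 * (1 - 1 / (l : ℝ)) ^ (S₁ + S₂))) + φ 0 := by ring
end

section
/- Let N ≥ 1 and l ≥ 1 be an integer, and let P_i^b = C(N,b) p^b (1−p)^{N−b} for p ∈ [0,1] be the binomial probability mass. Define λ(l,b,j) = l[(1−1/l)^b + (1−1/l)^j − 2(1−1/l)^{b}(1−1/l)^{j}]. Then Σ_{b=1}^{N} Σ_{j=1}^{N} P_i^b · P_i^j · λ(l, b, j) = 2l[ (1 − p/l)^N (1 − (1 − p/l)^N) + (1 − p)^N ((1 − p/l)^N − 1) ]. -/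
lemma key8 (N : ℕ) (p x : ℝ) :
    ∑ b ∈ Finset.Icc 1 N, (N.choose b : ℝ) * p ^ b * (1 - p) ^ (N - b) * x ^ b
      = (1 - p + p * x) ^ N - (1 - p) ^ N := by
  have hset : Finset.range (N + 1) = insert 0 (Finset.Icc 1 N) := by
    ext k; simp [Finset.mem_range, Finset.mem_Icc]; omega
  have h := add_pow (p * x) (1 - p) N
  rw [hset, Finset.sum_insert (by simp)] at h
  have : (1 - p + p * x) = (p * x) + (1 - p) := by ring
  rw [this, h]
  simp only [pow_zero, Nat.sub_zero, Nat.choose_zero_right, Nat.cast_one]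
  have : ∑ b ∈ Finset.Icc 1 N, (p * x) ^ b * (1 - p) ^ (N - b) * (N.choose b : ℝ)
      = ∑ b ∈ Finset.Icc 1 N, (N.choose b : ℝ) * p ^ b * (1 - p) ^ (N - b) * x ^ b := by
    refine Finset.sum_congr rfl fun b _ => by rw [mul_pow]; ring
  rw [this]; ring

/-- Closed-form evaluation of the binomially weighted double sum of `λ(l,b,j)`. -/
theorem stmt8 (N l : ℕ) (hN : 1 ≤ N) (hl : 1 ≤ l) (p : ℝ) (hp0 : 0 ≤ p) (hp1 : p ≤ 1) :
    ∑ b ∈ Finset.Icc 1 N, ∑ j ∈ Finset.Icc 1 N,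
        ((N.choose b : ℝ) * p ^ b * (1 - p) ^ (N - b)) *
          ((N.choose j : ℝ) * p ^ j * (1 - p) ^ (N - j)) *
          ((l : ℝ) * ((1 - 1 / (l : ℝ)) ^ b + (1 - 1 / (l : ℝ)) ^ j
              - 2 * (1 - 1 / (l : ℝ)) ^ b * (1 - 1 / (l : ℝ)) ^ j))
      = 2 * (l : ℝ) * ((1 - p / (l : ℝ)) ^ N * (1 - (1 - p / (l : ℝ)) ^ N)
          + (1 - p) ^ N * ((1 - p / (l : ℝ)) ^ N - 1)) := by
  set q : ℝ := 1 - 1 / (l : ℝ) with hq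
  set f : ℕ → ℝ := fun b => (N.choose b : ℝ) * p ^ b * (1 - p) ^ (N - b) * q ^ b with hf
  set g : ℕ → ℝ := fun b => (N.choose b : ℝ) * p ^ b * (1 - p) ^ (N - b) with hg
  set I := Finset.Icc 1 N with hI
  have hF : ∑ b ∈ I, f b = (1 - p / (l : ℝ)) ^ N - (1 - p) ^ N := by
    have hl0 : (l : ℝ) ≠ 0 := Nat.cast_ne_zero.mpr (by omega)
    rw [hf, key8]
    congr 2
    rw [hq]
    field_simp
    ring
  have hG : ∑ b ∈ I, g b = 1 - (1 - p) ^ N := by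
    have := key8 N p 1
    simp only [one_pow, mul_one] at this
    rw [hg, hI]
    simp only [this]
    norm_num
  have hsplit : ∑ b ∈ I, ∑ j ∈ I, g b * g j *
        ((l : ℝ) * (q ^ b + q ^ j - 2 * q ^ b * q ^ j))
      = (l : ℝ) * ((∑ b ∈ I, f b) * (∑ j ∈ I, g j))
        + (l : ℝ) * ((∑ b ∈ I, g b) * (∑ j ∈ I, f j))
        - 2 * (l : ℝ) * ((∑ b ∈ I, f b) * (∑ j ∈ I, f j)) := by
    rw [Finset.sum_mul_sum, Finset.sum_mul_sum, Finset.sum_mul_sum,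
      Finset.mul_sum, Finset.mul_sum, Finset.mul_sum, ← Finset.sum_add_distrib,
      ← Finset.sum_sub_distrib]
    refine Finset.sum_congr rfl fun b _ => ?_
    rw [Finset.mul_sum, Finset.mul_sum, Finset.mul_sum, ← Finset.sum_add_distrib,
      ← Finset.sum_sub_distrib]
    refine Finset.sum_congr rfl fun j _ => ?_
    simp only [hf, hg]
    ring
  rw [hsplit, hF, hG]
  ring
end
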